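/- For the scalar ODE u' = -u · (Σ_i b_i p_i^0 u^{d_i}) / (Σ_i p_i^0 u^{d_i}) with u(0) = 1, where all p_i^0 > 0, all b_i > 0, d_i ≥ 0 and at least one d_i = 0, the solution satisfies u(t) → 0 as t → ∞; i.e., the origin is a globally asymptotically stable equilibrium on (0,∞). -/

import Mathlib

open Filter Topology

/-- The rank-1 escort ODE `u' = -u (Σ bᵢ pᵢ⁰ u^{dᵢ})/(Σ pᵢ⁰ u^{dᵢ})` with
positive `bᵢ`, `pᵢ⁰`, nonnegative `dᵢ` and some `dᵢ = 0`: solutions starting at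
`u(0) = 1` tend to `0`, i.e. the origin is globally asymptotically stable on `(0,∞)`. -/
theorem rank_one_escort_tendsto_zero
    (n : ℕ) (hn : 0 < n) (b p0 d : Fin n → ℝ)
    (hb : ∀ i, 0 < b i) (hp0 : ∀ i, 0 < p0 i) (hd : ∀ i, 0 ≤ d i)
    (hd0 : ∃ i, d i = 0)
    (u : ℝ → ℝ) (hu0 : u 0 = 1) (hupos : ∀ t, 0 < u t)
    (hode : ∀ t, HasDerivAt u
      (-(u t) * (∑ i, b i * p0 i * u t ^ d i) / (∑ i, p0 i * u t ^ d i)) t) :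
    Tendsto u atTop (𝓝 0) := by
  have hne : (Finset.univ : Finset (Fin n)).Nonempty := ⟨⟨0, hn⟩, Finset.mem_univ _⟩
  set β : ℝ := Finset.univ.inf' hne b with hβ
  have hβpos : 0 < β := by
    rw [hβ, Finset.lt_inf'_iff]
    exact fun i _ => hb i
  have hβle : ∀ i, β ≤ b i := fun i => Finset.inf'_le _ (Finset.mem_univ i)
  -- u' t ≤ -β * u t
  have key : ∀ t, -(u t) * (∑ i, b i * p0 i * u t ^ d i) / (∑ i, p0 i * u t ^ d i)
      ≤ -β * u t := by
    intro t
    have hpow : ∀ i, (0:ℝ) < u t ^ d i := fun i => Real.rpow_pos_of_pos (hupos t) _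
    have hS : 0 < ∑ i, p0 i * u t ^ d i :=
      Finset.sum_pos (fun i _ => mul_pos (hp0 i) (hpow i)) hne
    rw [div_le_iff₀ hS]
    have h1 : β * (∑ i, p0 i * u t ^ d i) ≤ ∑ i, b i * p0 i * u t ^ d i := by
      rw [Finset.mul_sum]
      refine Finset.sum_le_sum fun i _ => ?_
      have := mul_le_mul_of_nonneg_right (hβle i)
        (le_of_lt (mul_pos (hp0 i) (hpow i)))
      nlinarith [this]
    nlinarith [mul_le_mul_of_nonneg_left h1 (le_of_lt (hupos t))]
  -- g t = u t * exp (β t) is antitone on [0,∞)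
  set g : ℝ → ℝ := fun t => u t * Real.exp (β * t) with hg
  have hg' : ∀ t, HasDerivAt g
      ((-(u t) * (∑ i, b i * p0 i * u t ^ d i) / (∑ i, p0 i * u t ^ d i))
        * Real.exp (β * t) + u t * (β * Real.exp (β * t))) t := by
    intro t
    have he : HasDerivAt (fun t => Real.exp (β * t)) (β * Real.exp (β * t)) t := by
      have := ((hasDerivAt_id t).const_mul β).exp
      simpa [mul_comm] using this
    exact (hode t).mul he
  have hganti : AntitoneOn g (Set.Ici (0:ℝ)) := by
    apply antitoneOn_of_deriv_nonpos (convex_Ici 0)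
    · exact fun t _ => ((hg' t).continuousAt).continuousWithinAt
    · exact fun t _ => (hg' t).differentiableAt.differentiableWithinAt
    · intro t _
      rw [(hg' t).deriv]
      have he : 0 < Real.exp (β * t) := Real.exp_pos _
      have := key t
      nlinarith [mul_le_mul_of_nonneg_right (key t) he.le]
  have hbound : ∀ t ≥ (0:ℝ), u t ≤ Real.exp (-(β * t)) := by
    intro t ht
    have := hganti (Set.self_mem_Ici) (Set.mem_Ici.mpr ht) ht
    have hg0 : g 0 = 1 := by simp [hg, hu0]
    have : u t * Real.exp (β * t) ≤ 1 := by rwa [hg0] at this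
    have he : 0 < Real.exp (β * t) := Real.exp_pos _
    rw [Real.exp_neg, ← mul_le_mul_iff_of_pos_right he, inv_mul_cancel₀ he.ne']
    exact this
  -- squeeze
  have hupper : Tendsto (fun t => Real.exp (-(β * t))) atTop (𝓝 0) := by
    apply Real.tendsto_exp_atBot.comp
    apply tendsto_neg_atBot_iff.mpr
    exact Tendsto.const_mul_atTop hβpos tendsto_id
  refine tendsto_of_tendsto_of_tendsto_of_le_of_le' tendsto_const_nhds hupper ?_ ?_
  · exact Eventually.of_forall fun t => (hupos t).le
  · filter_upwards [eventually_ge_atTop (0:ℝ)] with t ht using hbound t ht
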